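/- Let μ ≥ 0 and set x* = (3 − 4μ − √(16μ² − 4μ + 1))/2 (the square root is real since 16μ² − 4μ + 1 > 0 for all real μ). Then (x*, 0) is an equilibrium of the system ẋ = x[(c−4)y − 5μ + 4μ(x+y) + x(x+3y−3) + 2], ẏ = y[c(y−1) + x(x+3y−1)], for every c ∈ ℝ. Moreover, if 0 < μ < 2/5 and c > 0, then the Jacobian at (x*, 0) is triangular with both eigenvalues, −x*·√(16μ² − 4μ + 1) and −c + x*(x* − 1), strictly negative, so (x*, 0) is a linearly asymptotically stable node. -/

import Mathlib

/-- For the ALLD → ALLC replicator-mutator system, the boundary point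
`(x*, 0)` with `x* = (3 − 4μ − √(16μ² − 4μ + 1))/2` is an equilibrium for
every `c`; moreover, for `0 < μ < 2/5` and `c > 0` the Jacobian there is
triangular with both eigenvalues negative, so `(x*, 0)` is a linearly
asymptotically stable node. -/
theorem boundary_stable_node_ALLD_to_ALLC (μ : ℝ) (hμ : 0 ≤ μ)
    (xs : ℝ) (hxs : xs = (3 - 4 * μ - Real.sqrt (16 * μ ^ 2 - 4 * μ + 1)) / 2)
    (G1 G2 : ℝ → ℝ → ℝ → ℝ)
    (hG1 : ∀ c x y, G1 c x y
      = x * ((c - 4) * y - 5 * μ + 4 * μ * (x + y) + x * (x + 3 * y - 3) + 2))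
    (hG2 : ∀ c x y, G2 c x y = y * (c * (y - 1) + x * (x + 3 * y - 1))) :
    (0 < 16 * μ ^ 2 - 4 * μ + 1) ∧
    (∀ c : ℝ, G1 c xs 0 = 0 ∧ G2 c xs 0 = 0) ∧
    (0 < μ → μ < 2 / 5 → ∀ c : ℝ, 0 < c →
      (deriv (fun x => G1 c x 0) xs = -xs * Real.sqrt (16 * μ ^ 2 - 4 * μ + 1) ∧
       deriv (fun x => G2 c x 0) xs = 0 ∧
       deriv (fun y => G2 c xs y) 0 = -c + xs * (xs - 1)) ∧
      -xs * Real.sqrt (16 * μ ^ 2 - 4 * μ + 1) < 0 ∧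
      -c + xs * (xs - 1) < 0) := by
  have hD : 0 < 16 * μ ^ 2 - 4 * μ + 1 := by nlinarith [sq_nonneg (4 * μ - 1/2)]
  set s := Real.sqrt (16 * μ ^ 2 - 4 * μ + 1) with hsdef
  have hs2 : s ^ 2 = 16 * μ ^ 2 - 4 * μ + 1 := Real.sq_sqrt hD.le
  have hs0 : 0 ≤ s := Real.sqrt_nonneg _
  have hxs2 : 2 * xs = 3 - 4 * μ - s := by rw [hxs]; ring
  have hroot : xs ^ 2 + (4 * μ - 3) * xs + (2 - 5 * μ) = 0 := by
    nlinarith [hs2, hxs2]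
  refine ⟨hD, fun c => ⟨?_, ?_⟩, ?_⟩
  · rw [hG1]; nlinarith [hroot]
  · rw [hG2]; ring
  intro hμ0 hμ25 c hc
  have hxpos : 0 < xs := by nlinarith [hs2, hs0, hxs2]
  have hxlt1 : xs < 1 := by nlinarith [hs2, hs0, hxs2]
  have hspos : 0 < s := Real.sqrt_pos.mpr hD
  refine ⟨⟨?_, ?_, ?_⟩, ?_, ?_⟩
  · have hfe : (fun x => G1 c x 0)
        = fun x : ℝ => x ^ 3 + (4 * μ - 3) * x ^ 2 + (2 - 5 * μ) * x := by
      funext x; rw [hG1]; ring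
    have hd : HasDerivAt (fun x : ℝ => x ^ 3 + (4 * μ - 3) * x ^ 2 + (2 - 5 * μ) * x)
        (3 * xs ^ 2 + (4 * μ - 3) * (2 * xs) + (2 - 5 * μ)) xs := by
      have h1 := hasDerivAt_pow 3 xs
      have h2 := (hasDerivAt_pow 2 xs).const_mul (4 * μ - 3)
      have h3 := (hasDerivAt_id xs).const_mul (2 - 5 * μ)
      have := (h1.add h2).add h3
      refine this.congr_deriv ?_
      push_cast; ring
    rw [hfe, hd.deriv]
    nlinarith [hroot, hxs2, hs2]
  · have hfe : (fun x => G2 c x 0) = fun _ : ℝ => (0 : ℝ) := by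
      funext x; rw [hG2]; ring
    rw [hfe]; simp
  · have hfe : (fun y => G2 c xs y)
        = fun y : ℝ => (c + 3 * xs) * y ^ 2 + (xs ^ 2 - xs - c) * y := by
      funext y; rw [hG2]; ring
    have hd : HasDerivAt (fun y : ℝ => (c + 3 * xs) * y ^ 2 + (xs ^ 2 - xs - c) * y)
        ((c + 3 * xs) * (2 * 0) + (xs ^ 2 - xs - c)) (0 : ℝ) := by
      have h2 := (hasDerivAt_pow 2 (0 : ℝ)).const_mul (c + 3 * xs)
      have h3 := (hasDerivAt_id (0 : ℝ)).const_mul (xs ^ 2 - xs - c)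
      have := h2.add h3
      refine this.congr_deriv ?_
      push_cast; ring
    rw [hfe, hd.deriv]; ring
  · nlinarith [mul_pos hxpos hspos]
  · nlinarith [mul_pos hxpos (sub_pos.mpr hxlt1)]
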